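/- Let f(y) = Σ_{i=1}^k c_i y^{r_i} (log y)^{ℓ_i} on (0,1), where c_i ∈ ℝ are all nonzero, r_i ∈ ℚ, ℓ_i ∈ ℕ, and the pairs (r_i, ℓ_i) are pairwise distinct. Then f is Lebesgue integrable on (0,1) if and only if r_i > −1 for every i. -/

import Mathlib

open Real Finset MeasureTheory Set
open Filter Topology

-- aux 1: integrability of a single term with exponent > -1
lemma aux_integrable_term (s : ℝ) (hs : -1 < s) (n : ℕ) :
    IntegrableOn (fun y : ℝ => y ^ s * Real.log y ^ n) (Ioo (0:ℝ) 1) volume := by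
  set ε : ℝ := (s + 1) / 2 with hεdef
  have hε0 : 0 < ε := by simp only [hεdef]; linarith
  set s' : ℝ := (s - 1) / 2 with hs'def
  have hs' : -1 < s' := by simp only [hs'def]; linarith
  set t : ℝ := ε / (n + 1) with htdef
  have ht : 0 < t := by positivity
  have hint : IntegrableOn (fun y : ℝ => (1 / t) ^ n * y ^ s') (Ioo (0:ℝ) 1) volume :=
    ((intervalIntegral.integrableOn_Ioo_rpow_iff one_pos).2 hs').const_mul _
  refine Integrable.mono' hint ?_ ?_
  · refine ContinuousOn.aestronglyMeasurable (fun y hy => ?_) measurableSet_Ioo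
    have h1 : ContinuousAt (fun y : ℝ => y ^ s) y :=
      Real.continuousAt_rpow_const y s (Or.inl hy.1.ne')
    have h2 : ContinuousAt (fun y : ℝ => Real.log y ^ n) y :=
      (Real.continuousAt_log hy.1.ne').pow n
    exact (h1.mul h2).continuousWithinAt
  · filter_upwards [ae_restrict_mem measurableSet_Ioo] with y hy
    obtain ⟨hy0, hy1⟩ := hy
    have hsplit : y ^ s = y ^ s' * (y ^ (ε - n * t) * (y ^ t) ^ n) := by
      rw [← Real.rpow_natCast (y ^ t) n, ← Real.rpow_mul hy0.le, ← Real.rpow_add hy0,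
        ← Real.rpow_add hy0]
      congr 1
      simp only [hs'def, hεdef, htdef]
      field_simp
      ring
    have h1 : y ^ (ε - n * t) ≤ 1 := by
      apply Real.rpow_le_one hy0.le hy1.le
      have hkey : (n : ℝ) * t + t = ε := by
        rw [htdef]
        have hn1 : ((n:ℝ) + 1) ≠ 0 := by positivity
        field_simp
      linarith
    have h2 : |Real.log y * y ^ t| ^ n ≤ (1 / t) ^ n := by
      apply pow_le_pow_left₀ (abs_nonneg _)
      exact (Real.abs_log_mul_self_rpow_lt y t hy0 hy1.le ht).le
    have hy0' : 0 < y ^ s' := Real.rpow_pos_of_pos hy0 _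
    calc ‖y ^ s * Real.log y ^ n‖ = y ^ s * |Real.log y| ^ n := by
          rw [norm_mul, Real.norm_eq_abs, Real.norm_eq_abs, abs_pow,
            abs_of_pos (Real.rpow_pos_of_pos hy0 s)]
      _ = y ^ s' * (y ^ (ε - n * t) * (|Real.log y * y ^ t| ^ n)) := by
          rw [hsplit, abs_mul, mul_pow, abs_of_pos (Real.rpow_pos_of_pos hy0 t)]; ring
      _ ≤ y ^ s' * (1 * (1 / t) ^ n) := by
          apply mul_le_mul_of_nonneg_left _ hy0'.le
          exact mul_le_mul h1 h2 (by positivity) zero_le_one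
      _ = (1 / t) ^ n * y ^ s' := by ring

-- aux 2: y^ε (log y)^m → 0
lemma aux_tendsto_rpow_log (ε : ℝ) (hε : 0 < ε) (m : ℕ) :
    Tendsto (fun y : ℝ => y ^ ε * Real.log y ^ m) (𝓝[>] (0:ℝ)) (𝓝 0) := by
  rcases Nat.eq_zero_or_pos m with hm | hm
  · subst hm
    simp only [pow_zero, mul_one]
    have : ContinuousAt (fun y : ℝ => y ^ ε) 0 :=
      Real.continuousAt_rpow_const 0 ε (Or.inr hε.le)
    have h := this.tendsto.mono_left (nhdsWithin_le_nhds (s := Set.Ioi (0:ℝ)))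
    rwa [Real.zero_rpow hε.ne'] at h
  · have hεm : 0 < ε / m := by positivity
    have h := (tendsto_log_mul_rpow_nhdsGT_zero hεm).pow m
    rw [zero_pow hm.ne'] at h
    refine h.congr' ?_
    filter_upwards [self_mem_nhdsWithin] with y (hy : 0 < y)
    rw [mul_pow, ← Real.rpow_natCast (y ^ (ε / m)) m, ← Real.rpow_mul hy.le,
      div_mul_cancel₀ _ (by exact_mod_cast hm.ne' : (m:ℝ) ≠ 0)]
    ring

-- aux 3: (log y)⁻¹ → 0
lemma aux_tendsto_inv_log :
    Tendsto (fun y : ℝ => (Real.log y)⁻¹) (𝓝[>] (0:ℝ)) (𝓝 0) := by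
  have h1 : Tendsto (fun y : ℝ => -Real.log y) (𝓝[>] (0:ℝ)) atTop :=
    tendsto_neg_atBot_atTop.comp Real.tendsto_log_nhdsGT_zero
  have h2 := h1.inv_tendsto_atTop
  have h3 := h2.neg
  rw [neg_zero] at h3
  refine h3.congr fun y => ?_
  simp [inv_neg]

theorem integrable_sum_iff_each_term (k : ℕ) (r : Fin k → ℚ) (ℓ : Fin k → ℕ)
    (c : Fin k → ℝ) (hc : ∀ i, c i ≠ 0)
    (hdist : ∀ i j, i ≠ j → (r i, ℓ i) ≠ (r j, ℓ j)) :
    IntegrableOn (fun y : ℝ => ∑ i, c i * y ^ ((r i : ℝ)) * (Real.log y) ^ (ℓ i))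
        (Ioo (0:ℝ) 1) volume ↔
      ∀ i, (r i : ℝ) > -1 := by
  constructor
  · intro hf
    by_contra hcon
    push_neg at hcon
    obtain ⟨j, hj⟩ := hcon
    -- choose the dominant index i₀ : minimal r, then maximal ℓ
    have hne : (univ : Finset (Fin k)).Nonempty := ⟨j, mem_univ j⟩
    obtain ⟨i₁, -, hmin⟩ := Finset.exists_min_image univ r hne
    obtain ⟨i₀, hi₀S, hmax⟩ := Finset.exists_max_image
      (univ.filter (fun i => r i = r i₁)) ℓ ⟨i₁, by simp⟩
    have hri₀ : r i₀ = r i₁ := (Finset.mem_filter.1 hi₀S).2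
    set r₀ : ℝ := (r i₀ : ℝ) with hr₀def
    set ℓ₀ : ℕ := ℓ i₀ with hℓ₀def
    have hr₀le : r₀ ≤ -1 := by
      have h1 : r i₁ ≤ r j := hmin j (mem_univ j)
      have : (r i₀ : ℝ) ≤ (r j : ℝ) := by exact_mod_cast hri₀ ▸ h1
      linarith
    -- ratio function
    set G : ℝ → ℝ := fun y => ∑ i, c i * y ^ ((r i : ℝ) - r₀) * Real.log y ^ (ℓ i)
      * ((Real.log y)⁻¹) ^ ℓ₀ with hGdef
    -- each summand's limit
    have hGlim : Tendsto G (𝓝[>] (0:ℝ)) (𝓝 (c i₀)) := by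
      have hsum : (∑ i, if i = i₀ then c i₀ else (0:ℝ)) = c i₀ := by
        simp
      rw [hGdef, ← hsum]
      apply tendsto_finset_sum
      intro i _
      by_cases hii : i = i₀
      · subst hii
        simp only [if_pos rfl]
        have hev : ∀ᶠ y in 𝓝[>] (0:ℝ),
            c i * y ^ ((r i : ℝ) - r₀) * Real.log y ^ (ℓ i) * ((Real.log y)⁻¹) ^ ℓ₀ = c i := by
          filter_upwards [Ioo_mem_nhdsGT_of_mem (Set.mem_Ico.2 ⟨le_refl _, zero_lt_one⟩)]
            with y hy
          obtain ⟨hy0, hy1⟩ := hy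
          have hlog : Real.log y ≠ 0 := ne_of_lt (Real.log_neg hy0 hy1)
          rw [hr₀def, sub_self, Real.rpow_zero, ← hℓ₀def, mul_one, mul_assoc,
            ← mul_pow, mul_inv_cancel₀ hlog, one_pow, mul_one]
        exact Filter.Tendsto.congr' (Filter.EventuallyEq.symm hev) tendsto_const_nhds
      · simp only [if_neg hii]
        have hrle : r i₀ ≤ r i := hri₀ ▸ hmin i (mem_univ i)
        rcases lt_or_eq_of_le hrle with hlt | heq
        · -- r i₀ < r i : exponent positive
          have hε : (0:ℝ) < (r i : ℝ) - r₀ := by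
            rw [hr₀def]; exact_mod_cast sub_pos.2 hlt
          have h1 := (aux_tendsto_rpow_log _ hε (ℓ i)).const_mul (c i)
          have h2 := aux_tendsto_inv_log.pow ℓ₀
          have h3 := h1.mul h2
          rw [mul_zero] at h3
          have h4 : (0:ℝ) * 0 ^ ℓ₀ = 0 := by simp [zero_pow_eq]
          rw [h4] at h3
          refine h3.congr fun y => ?_
          ring
        · -- r i = r i₀, so ℓ i < ℓ₀
          have hℓle : ℓ i ≤ ℓ₀ := hmax i (Finset.mem_filter.2 ⟨mem_univ i, heq.symm ▸ hri₀⟩)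
          have hℓne : ℓ i ≠ ℓ₀ := by
            intro hcontra
            exact hdist i i₀ hii (by rw [← heq, hcontra, hℓ₀def])
          have hℓlt : ℓ i < ℓ₀ := lt_of_le_of_ne hℓle hℓne
          have h2 := (aux_tendsto_inv_log.pow (ℓ₀ - ℓ i)).const_mul (c i)
          rw [zero_pow (Nat.sub_ne_zero_of_lt hℓlt), mul_zero] at h2
          refine h2.congr' ?_
          filter_upwards [Ioo_mem_nhdsGT_of_mem (Set.mem_Ico.2 ⟨le_refl _, zero_lt_one⟩)]
            with y hy
          obtain ⟨hy0, hy1⟩ := hy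
          have hlog : Real.log y ≠ 0 := ne_of_lt (Real.log_neg hy0 hy1)
          have hre : (r i : ℝ) - r₀ = 0 := by rw [hr₀def, ← heq]; ring
          rw [hre, Real.rpow_zero, mul_one]
          have hsplit : ((Real.log y)⁻¹) ^ ℓ₀ = ((Real.log y)⁻¹) ^ (ℓ i) *
              ((Real.log y)⁻¹) ^ (ℓ₀ - ℓ i) := by
            rw [← pow_add, Nat.add_sub_cancel' hℓle]
          rw [hsplit, ← mul_assoc, mul_assoc (c i), ← mul_pow, mul_inv_cancel₀ hlog,
            one_pow, mul_one]
    -- eventual lower bound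
    have hc₀ : 0 < |c i₀| := abs_pos.2 (hc i₀)
    have hev1 : ∀ᶠ y in 𝓝[>] (0:ℝ), |c i₀| / 2 < |G y| := by
      have := (hGlim.abs).eventually (eventually_gt_nhds (by linarith : |c i₀| / 2 < |c i₀|))
      exact this
    have hexp : Real.exp (-1) < 1 := Real.exp_lt_one_iff.2 (by norm_num)
    have hev2 : Ioo (0:ℝ) (Real.exp (-1)) ∈ 𝓝[>] (0:ℝ) :=
      Ioo_mem_nhdsGT_of_mem (Set.mem_Ico.2 ⟨le_refl _, Real.exp_pos _⟩)
    obtain ⟨u, hu, hsub⟩ := (mem_nhdsGT_iff_exists_Ioo_subset).1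
      (Filter.inter_mem hev2 hev1)
    set δ : ℝ := min u (Real.exp (-1)) with hδdef
    have hδ0 : 0 < δ := lt_min hu (Real.exp_pos _)
    have hδ1 : δ < 1 := lt_of_le_of_lt (min_le_right _ _) hexp
    -- key pointwise bound on Ioo 0 δ
    have hbound : ∀ y ∈ Ioo (0:ℝ) δ, ‖y ^ (-1:ℝ)‖ ≤ (2 / |c i₀|) *
        ‖(∑ i, c i * y ^ ((r i : ℝ)) * (Real.log y) ^ (ℓ i))‖ := by
      intro y hy
      obtain ⟨hy0, hyδ⟩ := hy
      have hyu : y ∈ Set.Ioo 0 u := ⟨hy0, lt_of_lt_of_le hyδ (min_le_left _ _)⟩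
      obtain ⟨⟨-, hye⟩, hGy⟩ := hsub hyu
      have hy1 : y < 1 := lt_trans hye hexp
      have hlogy : Real.log y ≤ -1 := by
        calc Real.log y ≤ Real.log (Real.exp (-1)) :=
              Real.log_le_log hy0 hye.le
          _ = -1 := Real.log_exp _
      have hlogabs : 1 ≤ |Real.log y| := by
        rw [abs_of_neg (by linarith : Real.log y < 0)]; linarith
      -- factorization
      have hfact : (∑ i, c i * y ^ ((r i : ℝ)) * (Real.log y) ^ (ℓ i)) =
          y ^ r₀ * Real.log y ^ ℓ₀ * G y := by
        rw [hGdef, Finset.mul_sum]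
        apply Finset.sum_congr rfl
        intro i _
        have hlog : Real.log y ≠ 0 := by linarith
        have h1 : y ^ r₀ * y ^ ((r i : ℝ) - r₀) = y ^ ((r i : ℝ)) := by
          rw [← Real.rpow_add hy0]; ring_nf
        have h2 : Real.log y ^ ℓ₀ * ((Real.log y)⁻¹) ^ ℓ₀ = 1 := by
          rw [← mul_pow, mul_inv_cancel₀ hlog, one_pow]
        calc c i * y ^ ((r i : ℝ)) * Real.log y ^ ℓ i
            = c i * (y ^ r₀ * y ^ ((r i : ℝ) - r₀)) * Real.log y ^ ℓ i *
              (Real.log y ^ ℓ₀ * ((Real.log y)⁻¹) ^ ℓ₀) := by rw [h1, h2, mul_one]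
          _ = y ^ r₀ * Real.log y ^ ℓ₀ *
              (c i * y ^ ((r i : ℝ) - r₀) * Real.log y ^ ℓ i * ((Real.log y)⁻¹) ^ ℓ₀) := by
              ring
      have hyr0 : 0 < y ^ r₀ := Real.rpow_pos_of_pos hy0 _
      have hinv : y ^ (-1:ℝ) ≤ y ^ r₀ :=
        Real.rpow_le_rpow_of_exponent_ge hy0 hy1.le hr₀le
      have hpow1 : 1 ≤ |Real.log y| ^ ℓ₀ := one_le_pow₀ hlogabs
      have habs : ‖(∑ i, c i * y ^ ((r i : ℝ)) * (Real.log y) ^ (ℓ i))‖ =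
          y ^ r₀ * |Real.log y| ^ ℓ₀ * |G y| := by
        rw [hfact, Real.norm_eq_abs, abs_mul, abs_mul, abs_of_pos hyr0, abs_pow]
      rw [habs, Real.norm_eq_abs, abs_of_pos (Real.rpow_pos_of_pos hy0 _)]
      have hGhalf : |c i₀| / 2 ≤ |G y| := hGy.le
      calc y ^ (-1:ℝ) ≤ y ^ r₀ := hinv
        _ ≤ y ^ r₀ * (|Real.log y| ^ ℓ₀ * (2 / |c i₀| * |G y|)) := by
            have h5 : 1 ≤ 2 / |c i₀| * |G y| := by
              rw [div_mul_eq_mul_div, le_div_iff₀ hc₀]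
              linarith
            nlinarith [mul_le_mul hpow1 h5 zero_le_one (le_trans zero_le_one hpow1)]
        _ = 2 / |c i₀| * (y ^ r₀ * |Real.log y| ^ ℓ₀ * |G y|) := by ring
    -- derive integrability of y ^ (-1) on Ioo 0 δ, contradiction
    have hsubset : Ioo (0:ℝ) δ ⊆ Ioo (0:ℝ) 1 := Ioo_subset_Ioo le_rfl hδ1.le
    have hf' : IntegrableOn (fun y : ℝ => (2 / |c i₀|) *
        ‖(∑ i, c i * y ^ ((r i : ℝ)) * (Real.log y) ^ (ℓ i))‖) (Ioo (0:ℝ) δ) volume :=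
      ((hf.mono_set hsubset).norm.const_mul _)
    have hmeas : AEStronglyMeasurable (fun y : ℝ => y ^ (-1:ℝ))
        (volume.restrict (Ioo (0:ℝ) δ)) := by
      refine ContinuousOn.aestronglyMeasurable (fun y hy => ?_) measurableSet_Ioo
      exact (Real.continuousAt_rpow_const y _ (Or.inl hy.1.ne')).continuousWithinAt
    have hint : IntegrableOn (fun y : ℝ => y ^ (-1:ℝ)) (Ioo (0:ℝ) δ) volume := by
      refine Integrable.mono' hf' hmeas ?_
      filter_upwards [ae_restrict_mem measurableSet_Ioo] with y hy
      exact hbound y hy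
    rw [intervalIntegral.integrableOn_Ioo_rpow_iff hδ0] at hint
    linarith
  · intro h
    apply integrable_finset_sum
    intro i _
    have h2 : IntegrableOn (fun y : ℝ => c i * (y ^ ((r i : ℝ)) * Real.log y ^ (ℓ i)))
        (Ioo (0:ℝ) 1) volume := (aux_integrable_term (r i) (h i) (ℓ i)).const_mul (c i)
    refine IntegrableOn.congr_fun h2 (fun y _ => ?_) measurableSet_Ioo
    ring
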